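/- With U₀ = √(−2s₀) for s₀ ∈ (−1, 0), one has lim_{s₀ → 0⁻} √(−2s₀) · ∫_{s₀}^{0} 1 / ((1 − t²)^{3/2}·√(t − s₀)) dt = 0. -/

import Mathlib

open Real MeasureTheory Set Filter intervalIntegral

lemma aux_A_ge (s0 t : ℝ) (hs : -(1/2) < s0) (ht1 : s0 ≤ t) (ht2 : t ≤ 0) :
    (1/2 : ℝ) ≤ (Real.sqrt (1 - t ^ 2)) ^ 3 := by
  have ht : t ^ 2 ≤ 1/4 := by nlinarith
  have h34 : (0.64 : ℝ) ≤ 1 - t ^ 2 := by nlinarith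
  have hu : (0.8 : ℝ) ≤ Real.sqrt (1 - t ^ 2) := by
    have : Real.sqrt (0.64) ≤ Real.sqrt (1 - t ^ 2) := Real.sqrt_le_sqrt h34
    have h08 : Real.sqrt (0.64 : ℝ) = 0.8 := by
      rw [show (0.64 : ℝ) = 0.8 ^ 2 by norm_num, Real.sqrt_sq (by norm_num)]
    linarith [h08 ▸ this]
  nlinarith [hu, sq_nonneg (Real.sqrt (1 - t ^ 2))]

lemma aux_g_integrable (s0 : ℝ) :
    IntervalIntegrable (fun t : ℝ => (t - s0) ^ (-(1/2) : ℝ)) volume s0 0 := by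
  have h := (intervalIntegrable_rpow' (a := 0) (b := -s0)
      (r := (-(1/2) : ℝ)) (by norm_num)).comp_sub_right s0
  simpa using h

theorem stmt_17 :
    Filter.Tendsto
      (fun s0 => Real.sqrt (-2 * s0) *
        ∫ t in s0..0, 1 / ((Real.sqrt (1 - t ^ 2)) ^ 3 * Real.sqrt (t - s0)))
      (nhdsWithin 0 (Set.Iio 0)) (nhds 0) := by
  set F := fun s0 : ℝ => Real.sqrt (-2 * s0) *
      ∫ t in s0..0, 1 / ((Real.sqrt (1 - t ^ 2)) ^ 3 * Real.sqrt (t - s0)) with hF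
  have hmem : Ioo (-(1/2) : ℝ) 0 ∈ nhdsWithin (0 : ℝ) (Iio 0) :=
    Ioo_mem_nhdsLT_of_mem (by constructor <;> norm_num)
  -- upper bound function
  have hupper : ∀ s0 ∈ Ioo (-(1/2) : ℝ) 0,
      F s0 ≤ Real.sqrt (-2 * s0) * (4 * Real.sqrt (-s0)) := by
    intro s0 hs0
    obtain ⟨hs1, hs2⟩ := hs0
    have hs0le : s0 ≤ 0 := le_of_lt hs2
    set f := fun t : ℝ => 1 / ((Real.sqrt (1 - t ^ 2)) ^ 3 * Real.sqrt (t - s0)) with hf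
    set g := fun t : ℝ => 2 * (t - s0) ^ (-(1/2) : ℝ) with hg
    have hgint : IntervalIntegrable g volume s0 0 :=
      (aux_g_integrable s0).const_mul 2
    -- pointwise bound on Icc
    have hle : ∀ t ∈ Icc s0 (0:ℝ), f t ≤ g t := by
      intro t ht
      obtain ⟨ht1, ht2⟩ := ht
      rcases eq_or_lt_of_le ht1 with rfl | htlt
      · simp [hf, hg, Real.zero_rpow]
      · have hB : 0 < Real.sqrt (t - s0) := Real.sqrt_pos.mpr (by linarith)
        have hA : (1/2 : ℝ) ≤ (Real.sqrt (1 - t ^ 2)) ^ 3 := aux_A_ge s0 t hs1 ht1 ht2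
        have hgeq : g t = 2 / Real.sqrt (t - s0) := by
          simp only [hg]
          rw [Real.rpow_neg (by linarith : (0:ℝ) ≤ t - s0), ← Real.sqrt_eq_rpow]
          ring
        rw [hgeq]
        simp only [hf]
        rw [div_le_div_iff₀ (by positivity) hB]
        nlinarith [hB, hA]
      -- done
    have hfnonneg : ∀ t ∈ Icc s0 (0:ℝ), 0 ≤ f t := by
      intro t ht
      have : 0 ≤ (Real.sqrt (1 - t ^ 2)) ^ 3 * Real.sqrt (t - s0) := by positivity
      positivity
    -- integrability of f
    have hd : Continuous fun t : ℝ => (Real.sqrt (1 - t ^ 2)) ^ 3 * Real.sqrt (t - s0) :=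
      ((Real.continuous_sqrt.comp (by fun_prop)).pow 3).mul
        (Real.continuous_sqrt.comp (continuous_id.sub continuous_const))
    have hfmeas : Measurable f := by
      simpa only [hf, one_div, Pi.inv_def] using hd.measurable.inv
    have hfint : IntervalIntegrable f volume s0 0 := by
      apply hgint.mono_fun hfmeas.aestronglyMeasurable
      · rw [Filter.EventuallyLE, ae_restrict_iff' measurableSet_uIoc]
        filter_upwards with t ht
        have ht' : t ∈ Ioc s0 0 := by
          rwa [Set.uIoc_of_le hs0le] at ht
        have h1 : f t ≤ g t := hle t ⟨le_of_lt ht'.1, ht'.2⟩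
        have h2 : 0 ≤ f t := hfnonneg t ⟨le_of_lt ht'.1, ht'.2⟩
        simp only [Real.norm_eq_abs, abs_of_nonneg h2]
        calc f t ≤ g t := h1
          _ ≤ |g t| := le_abs_self _
    have hmono : (∫ t in s0..0, f t) ≤ ∫ t in s0..0, g t :=
      intervalIntegral.integral_mono_on hs0le hfint hgint hle
    have hgval : (∫ t in s0..0, g t) = 4 * Real.sqrt (-s0) := by
      rw [hg]
      rw [intervalIntegral.integral_const_mul]
      have : (∫ t in s0..0, (t - s0) ^ (-(1/2) : ℝ)) =
          ∫ x in (s0 - s0)..(0 - s0), x ^ (-(1/2) : ℝ) := by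
        rw [← intervalIntegral.integral_comp_sub_right (fun x => x ^ (-(1/2) : ℝ)) s0]
      rw [this]
      rw [integral_rpow (Or.inl (by norm_num))]
      have h0 : ((s0 - s0 : ℝ)) ^ ((-(1/2) : ℝ) + 1) = 0 := by
        rw [sub_self, Real.zero_rpow (by norm_num)]
      rw [h0]
      have : ((0 : ℝ) - s0) ^ ((-(1/2) : ℝ) + 1) = Real.sqrt (-s0) := by
        rw [Real.sqrt_eq_rpow]
        norm_num
      rw [this]
      ring
    have : (∫ t in s0..0, f t) ≤ 4 * Real.sqrt (-s0) := hgval ▸ hmono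
    have hsq : 0 ≤ Real.sqrt (-2 * s0) := Real.sqrt_nonneg _
    exact mul_le_mul_of_nonneg_left this hsq
  -- lower bound
  have hlower : ∀ s0 ∈ Ioo (-(1/2) : ℝ) 0, (0:ℝ) ≤ F s0 := by
    intro s0 hs0
    have hs0le : s0 ≤ 0 := le_of_lt hs0.2
    have hint : 0 ≤ ∫ t in s0..0,
        1 / ((Real.sqrt (1 - t ^ 2)) ^ 3 * Real.sqrt (t - s0)) := by
      apply intervalIntegral.integral_nonneg hs0le
      intro t ht
      positivity
    exact mul_nonneg (Real.sqrt_nonneg _) hint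
  -- squeeze
  have htop : Filter.Tendsto (fun s0 : ℝ => Real.sqrt (-2 * s0) * (4 * Real.sqrt (-s0)))
      (nhdsWithin 0 (Set.Iio 0)) (nhds 0) := by
    have hc : Continuous (fun s0 : ℝ => Real.sqrt (-2 * s0) * (4 * Real.sqrt (-s0))) := by
      continuity
    have := hc.tendsto 0
    simp only [mul_zero, neg_zero, Real.sqrt_zero, zero_mul] at this
    exact this.mono_left nhdsWithin_le_nhds
  refine tendsto_of_tendsto_of_tendsto_of_le_of_le' tendsto_const_nhds htop ?_ ?_
  · filter_upwards [hmem] with s0 hs0 using hlower s0 hs0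
  · filter_upwards [hmem] with s0 hs0 using hupper s0 hs0
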